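/- Let P, Q: ℝ^d → ℝ ∪ {+∞} with Q strongly convex with modulus 1/λ (λ > 0) and P convex. Suppose sequences satisfy y^k ∈ ∂P(x^k) and x^{k+1} ∈ argmin{Q(x) − ⟨y^k, x⟩}. Then Q(x^{k+1}) − P(x^{k+1}) ≤ Q(x^k) − P(x^k) − (1/(2λ))‖x^{k+1} − x^k‖². -/

import Mathlib

/-- The (convex) subdifferential of `f` at `x`. -/
def subdiff {E : Type*} [NormedAddCommGroup E] [InnerProductSpace ℝ E]
    (f : E → ℝ) (x : E) : Set E :=
  {t | ∀ u : E, f x + (inner ℝ t (u - x) : ℝ) ≤ f u}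

/-- Quadratic growth at a minimizer of a strongly convex function. -/
lemma growth_aux {E : Type*} [NormedAddCommGroup E] [InnerProductSpace ℝ E]
    (g : E → ℝ) (c : ℝ) (hc : 0 < c)
    (hconv : ConvexOn ℝ Set.univ (fun x => g x - c * ‖x‖ ^ 2))
    (z u : E) (hmin : IsMinOn g Set.univ z) :
    g z + c * ‖u - z‖ ^ 2 ≤ g u := by
  rcases eq_or_ne u z with rfl | hne
  · simp
  have hr : (0:ℝ) < ‖u - z‖ ^ 2 :=
    pow_pos (norm_pos_iff.mpr (sub_ne_zero.mpr hne)) 2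
  have key : ∀ t : ℝ, 0 < t → t < 1 → c * (1 - t) * ‖u - z‖ ^ 2 ≤ g u - g z := by
    intro t ht ht1
    have ha : (0:ℝ) ≤ 1 - t := by linarith
    have hb : (0:ℝ) ≤ t := le_of_lt ht
    have hab : (1 - t) + t = 1 := by ring
    have hcv := hconv.2 (Set.mem_univ z) (Set.mem_univ u) ha hb hab
    have hmin' := hmin (Set.mem_univ ((1 - t) • z + t • u))
    simp only [smul_eq_mul] at hcv hmin'
    have hid : ‖(1 - t) • z + t • u‖ ^ 2
        = (1 - t) * ‖z‖ ^ 2 + t * ‖u‖ ^ 2 - (1 - t) * t * ‖z - u‖ ^ 2 := by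
      rw [norm_add_sq_real, norm_sub_sq_real, norm_smul, norm_smul, real_inner_smul_left,
        inner_smul_right, Real.norm_of_nonneg ha, Real.norm_of_nonneg hb, mul_pow, mul_pow]
      ring
    have hzu : ‖z - u‖ ^ 2 = ‖u - z‖ ^ 2 := by rw [norm_sub_rev]
    rw [hid, hzu] at hcv
    simp only [Set.mem_setOf_eq] at hmin'
    nlinarith [hcv, hmin', mul_pos ht hr]
  refine le_of_forall_pos_le_add fun ε hε => ?_
  set r := ‖u - z‖ ^ 2 with hrdef
  set t : ℝ := min (1/2) (ε / (2 * c * r)) with htdef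
  have htpos : 0 < t := by
    apply lt_min (by norm_num)
    positivity
  have htlt : t < 1 := lt_of_le_of_lt (min_le_left _ _) (by norm_num)
  have hkey := key t htpos htlt
  have hbound : c * t * r ≤ ε := by
    have h1 : t ≤ ε / (2 * c * r) := min_le_right _ _
    have h2 : c * t * r ≤ c * (ε / (2 * c * r)) * r := by
      have := mul_le_mul_of_nonneg_left h1 (le_of_lt hc)
      nlinarith
    have h3 : c * (ε / (2 * c * r)) * r = ε / 2 := by
      field_simp
    linarith
  nlinarith [hkey]

theorem stmt_16 {d : ℕ} (P Q : EuclideanSpace ℝ (Fin d) → ℝ)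
    (lam : ℝ) (hlam : 0 < lam)
    (hP : ConvexOn ℝ Set.univ P)
    (hQ : ConvexOn ℝ Set.univ (fun x => Q x - (1 / (2 * lam)) * ‖x‖ ^ 2))
    (xk xnext yk : EuclideanSpace ℝ (Fin d))
    (hy : yk ∈ subdiff P xk)
    (hmin : IsMinOn (fun x => Q x - (inner ℝ yk x : ℝ)) Set.univ xnext) :
    Q xnext - P xnext ≤ Q xk - P xk - (1 / (2 * lam)) * ‖xnext - xk‖ ^ 2 := by
  set c : ℝ := 1 / (2 * lam) with hcdef
  have hc : 0 < c := by positivity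
  have hlin : ConcaveOn ℝ Set.univ (fun x : EuclideanSpace ℝ (Fin d) => (inner ℝ yk x : ℝ)) := by
    refine ⟨convex_univ, fun x _ y _ a b _ _ _ => ?_⟩
    simp only [smul_eq_mul]
    rw [inner_add_right, real_inner_smul_right, real_inner_smul_right]
  have hconv : ConvexOn ℝ Set.univ
      (fun x => (Q x - (inner ℝ yk x : ℝ)) - c * ‖x‖ ^ 2) := by
    have h := hQ.sub hlin
    have he : (fun x => (Q x - (inner ℝ yk x : ℝ)) - c * ‖x‖ ^ 2)
        = ((fun x => Q x - c * ‖x‖ ^ 2) - fun x => (inner ℝ yk x : ℝ)) := by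
      funext x; simp only [Pi.sub_apply]; ring
    rw [he]; exact h
  have hgrow := growth_aux (fun x => Q x - (inner ℝ yk x : ℝ)) c hc hconv xnext xk hmin
  have hsub := hy xnext
  rw [inner_sub_right] at hsub
  have hnorm : ‖xk - xnext‖ ^ 2 = ‖xnext - xk‖ ^ 2 := by rw [norm_sub_rev]
  rw [hnorm] at hgrow
  linarith
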